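/- For every natural number n, the derivative of the function z ↦ g_n(z) at the point z = 1/4 equals −(2/3)·n·(n+1)·(n+2). -/

import Mathlib

/-- The G-polynomials: `G 0 z = 1`, `G 1 z = 1`, `G (n+2) z = G (n+1) z - z * G n z`. -/
noncomputable def G : ℕ → ℝ → ℝ
  | 0, _ => 1
  | 1, _ => 1
  | (n + 2), z => G (n + 1) z - z * G n z

/-- The irrational functions `g n z = G n z / (√z)^n`. -/
noncomputable def g (n : ℕ) (z : ℝ) : ℝ := G n z / (Real.sqrt z) ^ n

lemma Gkey : ∀ n : ℕ, HasDerivAt (G n) (-(2/3) * n * ((n:ℝ)^2 - 1) / 2^n) (1/4)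
    ∧ G n (1/4) = ((n:ℝ) + 1) / 2^n := by
  intro n
  induction n using Nat.strong_induction_on with
  | _ n ih =>
    match n with
    | 0 => constructor
           · exact (hasDerivAt_const (1/4 : ℝ) (1:ℝ)).congr_deriv (by simp)
           · simp [G]
    | 1 => constructor
           · exact (hasDerivAt_const (1/4 : ℝ) (1:ℝ)).congr_deriv (by simp)
           · simp [G]
    | (n + 2) =>
      obtain ⟨h1, e1⟩ := ih (n+1) (by omega)
      obtain ⟨h0, e0⟩ := ih n (by omega)
      have hmul : HasDerivAt (fun z : ℝ => z * G n z)
          (1 * G n (1/4) + (1/4) * (-(2/3) * n * ((n:ℝ)^2 - 1) / 2^n)) (1/4) :=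
        (hasDerivAt_id (1/4 : ℝ)).mul h0
      have hd : HasDerivAt (G (n+2))
          ((-(2/3) * (n+1) * (((n:ℝ)+1)^2 - 1) / 2^(n+1)) -
            (1 * G n (1/4) + (1/4) * (-(2/3) * n * ((n:ℝ)^2 - 1) / 2^n))) (1/4) := by
        have h := h1.sub hmul
        exact h.congr_deriv (by push_cast; ring)
      constructor
      · convert hd using 1
        rw [e0]
        push_cast
        field_simp
        ring
      · show G (n+1) (1/4) - (1/4) * G n (1/4) = _
        rw [e0, e1]
        push_cast
        field_simp
        ring

theorem stmt_12 (n : ℕ) :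
    HasDerivAt (g n) (-(2 / 3) * n * (n + 1) * (n + 2)) (1 / 4) := by
  obtain ⟨hd, hv⟩ := Gkey n
  have hsq : Real.sqrt (1/4 : ℝ) = 1/2 := by
    rw [show (1/4 : ℝ) = (1/2)^2 by norm_num, Real.sqrt_sq (by norm_num)]
  have hs : HasDerivAt Real.sqrt (1 / (2 * Real.sqrt (1/4 : ℝ))) (1/4) :=
    Real.hasDerivAt_sqrt (by norm_num)
  have hp : HasDerivAt (fun z : ℝ => Real.sqrt z ^ n)
      ((n : ℝ) * Real.sqrt (1/4 : ℝ) ^ (n - 1) * (1 / (2 * Real.sqrt (1/4 : ℝ)))) (1/4) :=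
    hs.pow n
  have hne : Real.sqrt (1/4 : ℝ) ^ n ≠ 0 := by rw [hsq]; positivity
  have := hd.div hp hne
  have : HasDerivAt (g n)
      (((-(2/3) * n * ((n:ℝ)^2 - 1) / 2^n) * Real.sqrt (1/4 : ℝ) ^ n -
        G n (1/4) * ((n : ℝ) * Real.sqrt (1/4 : ℝ) ^ (n - 1) * (1 / (2 * Real.sqrt (1/4 : ℝ))))) /
        (Real.sqrt (1/4 : ℝ) ^ n) ^ 2) (1/4) := this
  convert this using 1
  rw [hv, hsq]
  rcases n with _ | m
  · norm_num
  · have hm : (m + 1) - 1 = m := rfl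
    rw [hm]
    push_cast
    have h2 : ((1:ℝ)/2)^m ≠ 0 := by positivity
    field_simp
    have h4 : ((1:ℝ)/2)^m * 2^m = 1 := by rw [← mul_pow]; norm_num
    have h3 : ((1:ℝ)/2)^(m*2) * 2^m = (1/2)^m := by rw [pow_mul, sq, mul_assoc, h4, mul_one]
    linear_combination (-((m:ℝ)*5) - (m:ℝ)^2 - 6) * h3
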